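/- Let C ⊆ ℝ^{r+1} be a polyhedral cone with dim C = r + 1, and let f : C → ℝ be a superlinear function such that for every 2-dimensional linear subspace H ⊆ ℝ^{r+1} the restriction of f to H ∩ C is piecewise linear. Let C' ⊆ C be a polyhedral subcone of dimension r + 1 on which f is linear, and let ℓ : ℝ^{r+1} → ℝ be the unique linear function agreeing with f on C'. Then the set {z ∈ C : f(z) = ℓ(z)} is a topologically closed convex cone (closed under addition and under multiplication by nonnegative reals). -/

import Mathlib

open Filter Topology


/-- A polyhedral cone in `ℝⁿ`: the set of nonnegative real combinations of finitely many
vectors. -/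
def IsPolyhedralCone {n : ℕ} (C : Set (Fin n → ℝ)) : Prop :=
  ∃ (k : ℕ) (v : Fin k → Fin n → ℝ),
    C = {x | ∃ c : Fin k → ℝ, (∀ i, 0 ≤ c i) ∧ x = ∑ i, c i • v i}

/-- A function is piecewise linear on a set `C` if `C` admits a finite decomposition into
polyhedral cones on each of which the function agrees with a linear function. -/
def IsPiecewiseLinearOn {n : ℕ} (f : (Fin n → ℝ) → ℝ) (C : Set (Fin n → ℝ)) : Prop :=
  ∃ (m : ℕ) (D : Fin m → Set (Fin n → ℝ)),
    (∀ i, IsPolyhedralCone (D i)) ∧ C = ⋃ i, D i ∧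
    ∀ i, ∃ ℓ : (Fin n → ℝ) →ₗ[ℝ] ℝ, ∀ x ∈ D i, f x = ℓ x


/-- One reduction step of conic Carathéodory. -/
lemma reduce_step {n k : ℕ} (v : Fin k → Fin n → ℝ) (s : Finset (Fin k))
    (c d : Fin k → ℝ) (hc : ∀ i, 0 ≤ c i)
    (hd0 : ∑ i ∈ s, d i • v i = 0)
    (hdout : ∀ i ∉ s, d i = 0)
    (hpos : ∃ i ∈ s, 0 < d i) :
    ∃ j ∈ s, ∃ c' : Fin k → ℝ, (∀ i, 0 ≤ c' i) ∧
      ∑ i ∈ s, c i • v i = ∑ i ∈ s.erase j, c' i • v i := by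
  classical
  set P := s.filter (fun i => 0 < d i) with hP
  have hPne : P.Nonempty := by
    obtain ⟨i, his, hdi⟩ := hpos
    exact ⟨i, Finset.mem_filter.mpr ⟨his, hdi⟩⟩
  obtain ⟨j, hjP, hjmin⟩ := P.exists_min_image (fun i => c i / d i) hPne
  have hjs : j ∈ s := (Finset.mem_filter.mp hjP).1
  have hdj : 0 < d j := (Finset.mem_filter.mp hjP).2
  set t₀ := c j / d j with ht₀
  have ht₀0 : 0 ≤ t₀ := div_nonneg (hc j) hdj.le
  refine ⟨j, hjs, fun i => c i - t₀ * d i, ?_, ?_⟩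
  · intro i
    show 0 ≤ c i - t₀ * d i
    by_cases hdi : 0 < d i
    · have his : i ∈ s := by
        by_contra hns
        rw [hdout i hns] at hdi
        exact lt_irrefl 0 hdi
      have h1 : t₀ ≤ c i / d i := hjmin i (Finset.mem_filter.mpr ⟨his, hdi⟩)
      have : t₀ * d i ≤ c i := by rw [← le_div_iff₀ hdi]; exact h1
      linarith
    · push_neg at hdi
      have h1 : t₀ * d i ≤ 0 := mul_nonpos_of_nonneg_of_nonpos ht₀0 hdi
      have h2 := hc i
      linarith
  · have hsum : ∑ i ∈ s, (c i - t₀ * d i) • v i = ∑ i ∈ s, c i • v i := by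
      simp only [sub_smul]
      rw [Finset.sum_sub_distrib]
      have : ∑ i ∈ s, (t₀ * d i) • v i = t₀ • ∑ i ∈ s, d i • v i := by
        rw [Finset.smul_sum]; simp [smul_smul]
      rw [this, hd0, smul_zero, sub_zero]
    rw [← hsum]
    rw [Finset.sum_erase]
    show (c j - t₀ * d j) • v j = 0
    have : c j - t₀ * d j = 0 := by
      rw [ht₀, div_mul_cancel₀ _ hdj.ne', sub_self]
    rw [this, zero_smul]

/-- Conic Carathéodory: a conic combination over `s` equals a conic combination over a
linearly independent subfamily. -/
lemma caratheodory_cone {n k : ℕ} (v : Fin k → Fin n → ℝ) :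
    ∀ s : Finset (Fin k), ∀ c : Fin k → ℝ, (∀ i, 0 ≤ c i) →
    ∃ t : Finset (Fin k), t ⊆ s ∧ LinearIndependent ℝ (fun i : t => v i) ∧
      ∃ c' : Fin k → ℝ, (∀ i, 0 ≤ c' i) ∧
        ∑ i ∈ s, c i • v i = ∑ i ∈ t, c' i • v i := by
  classical
  intro s
  induction s using Finset.strongInduction with
  | _ s ih =>
    intro c hc
    by_cases hli : LinearIndependent ℝ (fun i : s => v i)
    · exact ⟨s, Finset.Subset.refl s, hli, c, hc, rfl⟩
    · obtain ⟨g, hg0, i₀, hi₀⟩ := Fintype.not_linearIndependent_iff.mp hli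
      set d : Fin k → ℝ := fun i => if h : i ∈ s then g ⟨i, h⟩ else 0 with hd
      have hdsum : ∑ i ∈ s, d i • v i = 0 := by
        rw [← Finset.sum_attach s (fun i => d i • v i)]
        rw [← hg0]
        apply Finset.sum_congr rfl
        intro i _
        simp [hd, i.2]
      have hdout : ∀ i ∉ s, d i = 0 := fun i hi => by simp [hd, hi]
      have hcase : (∃ i ∈ s, 0 < d i) ∨ (∃ i ∈ s, 0 < -d i) := by
        rcases lt_trichotomy (g i₀) 0 with h | h | h
        · right; exact ⟨i₀, i₀.2, by simp [hd, i₀.2]; linarith⟩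
        · exact absurd h hi₀
        · left; exact ⟨i₀, i₀.2, by simp [hd, i₀.2]; linarith⟩
      have key : ∀ e : Fin k → ℝ, (∑ i ∈ s, e i • v i = 0) → (∀ i ∉ s, e i = 0) →
          (∃ i ∈ s, 0 < e i) →
          ∃ t : Finset (Fin k), t ⊆ s ∧ LinearIndependent ℝ (fun i : t => v i) ∧
            ∃ c' : Fin k → ℝ, (∀ i, 0 ≤ c' i) ∧
              ∑ i ∈ s, c i • v i = ∑ i ∈ t, c' i • v i := by
        intro e he0 heout hepos
        obtain ⟨j, hjs, c', hc', heq⟩ := reduce_step v s c e hc he0 heout hepos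
        obtain ⟨t, hts, htli, c'', hc'', heq'⟩ :=
          ih (s.erase j) (Finset.erase_ssubset hjs) c' hc'
        exact ⟨t, hts.trans (Finset.erase_subset j s), htli, c'', hc'',
          by rw [heq, heq']⟩
      rcases hcase with hp | hp
      · exact key d hdsum hdout hp
      · refine key (-d) ?_ (fun i hi => by simp [hdout i hi]) hp
        simp only [Pi.neg_apply, neg_smul, Finset.sum_neg_distrib, hdsum, neg_zero]

/-- The cone over a linearly independent subfamily is closed. -/
lemma isClosed_cone_indep {n k : ℕ} (v : Fin k → Fin n → ℝ) (t : Finset (Fin k))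
    (hli : LinearIndependent ℝ (fun i : t => v i)) :
    IsClosed {x : Fin n → ℝ | ∃ c : Fin k → ℝ, (∀ i, 0 ≤ c i) ∧ x = ∑ i ∈ t, c i • v i} := by
  classical
  let φ : ({ x // x ∈ t } → ℝ) →ₗ[ℝ] (Fin n → ℝ) :=
    { toFun := fun c => ∑ i : t, c i • v i
      map_add' := by intro a b; simp [add_smul, Finset.sum_add_distrib]
      map_smul' := by intro m a; simp [Finset.smul_sum, smul_smul]}
  have hker : LinearMap.ker φ = ⊥ := by
    rw [LinearMap.ker_eq_bot']
    intro m hm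
    funext i
    exact Fintype.linearIndependent_iff.mp hli m hm i
  have hemb : IsClosedEmbedding φ := LinearMap.isClosedEmbedding_of_injective hker
  have himage : {x : Fin n → ℝ | ∃ c : Fin k → ℝ, (∀ i, 0 ≤ c i) ∧ x = ∑ i ∈ t, c i • v i}
      = φ '' {c : { x // x ∈ t } → ℝ | ∀ i, 0 ≤ c i} := by
    ext x
    constructor
    · rintro ⟨c, hc, rfl⟩
      refine ⟨fun i => c i, fun i => hc i, ?_⟩
      show (∑ i : t, c i • v i) = ∑ i ∈ t, c i • v i
      exact Finset.sum_coe_sort t (fun i => c i • v i)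
    · rintro ⟨c, hc, rfl⟩
      refine ⟨fun i => if h : i ∈ t then c ⟨i, h⟩ else 0, ?_, ?_⟩
      · intro i
        by_cases h : i ∈ t
        · simpa [h] using hc ⟨i, h⟩
        · simp [h]
      · show (∑ i : t, c i • v i) = _
        rw [← Finset.sum_coe_sort t
          (fun i => (if h : i ∈ t then c ⟨i, h⟩ else 0) • v i)]
        apply Finset.sum_congr rfl
        intro i _
        simp [i.2]
  rw [himage]
  apply hemb.isClosedMap
  have : {c : { x // x ∈ t } → ℝ | ∀ i, 0 ≤ c i}
      = Set.pi Set.univ (fun _ => Set.Ici (0:ℝ)) := by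
    ext c
    constructor
    · intro h i _; exact h i
    · intro h i; exact h i (Set.mem_univ i)
  rw [this]
  exact isClosed_set_pi (fun _ _ => isClosed_Ici)

lemma IsPolyhedralCone.isClosed {n : ℕ} {C : Set (Fin n → ℝ)}
    (h : IsPolyhedralCone C) : IsClosed C := by
  classical
  obtain ⟨k, v, rfl⟩ := h
  have hdecomp : {x : Fin n → ℝ | ∃ c : Fin k → ℝ, (∀ i, 0 ≤ c i) ∧ x = ∑ i, c i • v i}
      = ⋃ t ∈ {t : Finset (Fin k) | LinearIndependent ℝ (fun i : t => v i)},
          {x : Fin n → ℝ | ∃ c : Fin k → ℝ, (∀ i, 0 ≤ c i) ∧ x = ∑ i ∈ t, c i • v i} := by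
    ext x
    simp only [Set.mem_iUnion, Set.mem_setOf_eq]
    constructor
    · rintro ⟨c, hc, rfl⟩
      obtain ⟨t, _, hli, c', hc', heq⟩ := caratheodory_cone v Finset.univ c hc
      exact ⟨t, hli, c', hc', heq⟩
    · rintro ⟨t, hli, c, hc, rfl⟩
      refine ⟨fun i => if i ∈ t then c i else 0, ?_, ?_⟩
      · intro i; by_cases h : i ∈ t <;> simp [h, hc i]
      · calc ∑ i ∈ t, c i • v i
            = ∑ i ∈ Finset.univ ∩ t, c i • v i := by rw [Finset.univ_inter]
          _ = ∑ i, if i ∈ t then c i • v i else 0 := (Finset.sum_ite_mem _ _ _).symm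
          _ = ∑ i, (fun i => if i ∈ t then c i else 0) i • v i := by
              apply Finset.sum_congr rfl
              intro i _
              by_cases h : i ∈ t <;> simp [h]
  rw [hdecomp]
  exact (Set.toFinite _).isClosed_biUnion (fun t ht => isClosed_cone_indep v t ht)

lemma IsPolyhedralCone.add_mem {n : ℕ} {C : Set (Fin n → ℝ)} (h : IsPolyhedralCone C) :
    ∀ x ∈ C, ∀ y ∈ C, x + y ∈ C := by
  obtain ⟨k, v, rfl⟩ := h
  rintro x ⟨c, hc, rfl⟩ y ⟨c', hc', rfl⟩
  exact ⟨c + c', fun i => add_nonneg (hc i) (hc' i),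
    by simp [add_smul, Finset.sum_add_distrib]⟩

lemma IsPolyhedralCone.smul_mem {n : ℕ} {C : Set (Fin n → ℝ)} (h : IsPolyhedralCone C) :
    ∀ x ∈ C, ∀ a : ℝ, 0 ≤ a → a • x ∈ C := by
  obtain ⟨k, v, rfl⟩ := h
  rintro x ⟨c, hc, rfl⟩ a ha
  exact ⟨fun i => a * c i, fun i => mul_nonneg ha (hc i),
    by rw [Finset.smul_sum]; simp [smul_smul]⟩

lemma IsPolyhedralCone.convex {n : ℕ} {C : Set (Fin n → ℝ)} (h : IsPolyhedralCone C) :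
    Convex ℝ C := by
  intro x hx y hy a b ha hb _
  exact h.add_mem _ (h.smul_mem x hx a ha) _ (h.smul_mem y hy b hb)

/-- **The locus where a superlinear function agrees with a full-dimensional linear piece
is a closed convex cone.** Let `C ⊆ ℝ^{r+1}` be a polyhedral cone of full dimension
`r+1`, `f : C → ℝ` superlinear with piecewise linear restriction to `H ∩ C` for every
2-dimensional subspace `H`. Let `C' ⊆ C` be a full-dimensional polyhedral subcone on
which `f` is linear, with `ℓ` the (unique) linear function agreeing with `f` on `C'`.
Then `{z ∈ C : f z = ℓ z}` is a topologically closed convex cone. -/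
theorem agreement_locus_closed_cone
    (r : ℕ) (C C' : Set (Fin (r + 1) → ℝ)) (hC : IsPolyhedralCone C)
    (hdim : (interior C).Nonempty)
    (f : (Fin (r + 1) → ℝ) → ℝ)
    (hsuper : ∀ x ∈ C, ∀ y ∈ C, ∀ a b : ℝ, 0 ≤ a → 0 ≤ b →
      a * f x + b * f y ≤ f (a • x + b • y))
    (hH : ∀ H : Submodule ℝ (Fin (r + 1) → ℝ), Module.finrank ℝ H = 2 →
      IsPiecewiseLinearOn f ((H : Set (Fin (r + 1) → ℝ)) ∩ C))
    (hC' : IsPolyhedralCone C') (hC'sub : C' ⊆ C) (hdim' : (interior C').Nonempty)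
    (ℓ : (Fin (r + 1) → ℝ) →ₗ[ℝ] ℝ) (hℓ : ∀ x ∈ C', f x = ℓ x) :
    IsClosed {z ∈ C | f z = ℓ z} ∧
    Convex ℝ {z ∈ C | f z = ℓ z} ∧
    (∀ x ∈ {z ∈ C | f z = ℓ z}, ∀ y ∈ {z ∈ C | f z = ℓ z},
      x + y ∈ {z ∈ C | f z = ℓ z}) ∧
    (∀ x ∈ {z ∈ C | f z = ℓ z}, ∀ a : ℝ, 0 ≤ a → a • x ∈ {z ∈ C | f z = ℓ z}) := by
  classical
  set S := {z ∈ C | f z = ℓ z} with hSdef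
  have hCclosed : IsClosed C := hC.isClosed
  have hCconv : Convex ℝ C := hC.convex
  obtain ⟨x₀, hx₀⟩ := hdim'
  have hx₀C' : x₀ ∈ C' := interior_subset hx₀
  have hx₀C : x₀ ∈ C := hC'sub hx₀C'
  have hx₀i : x₀ ∈ interior C := interior_mono hC'sub hx₀
  have hfx₀ : f x₀ = ℓ x₀ := hℓ _ hx₀C'
  -- f ≤ ℓ on C
  have hfle : ∀ z ∈ C, f z ≤ ℓ z := by
    intro z hz
    have hcont : Continuous fun ε : ℝ => x₀ - ε • z := by continuity
    have hopen : IsOpen {ε : ℝ | x₀ - ε • z ∈ interior C'} :=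
      isOpen_interior.preimage hcont
    have h0mem : (0:ℝ) ∈ {ε : ℝ | x₀ - ε • z ∈ interior C'} := by
      simpa using hx₀
    obtain ⟨δ, hδ0, hδ⟩ := Metric.isOpen_iff.mp hopen 0 h0mem
    have hεmem : x₀ - (δ/2) • z ∈ C' := by
      have : (δ/2 : ℝ) ∈ Metric.ball (0:ℝ) δ := by
        rw [Metric.mem_ball, Real.dist_eq, sub_zero, abs_of_pos (half_pos hδ0)]
        linarith
      exact interior_subset (hδ this)
    have hε0 : (0:ℝ) < δ/2 := half_pos hδ0
    have h1 := hsuper (x₀ - (δ/2) • z) (hC'sub hεmem) z hz 1 (δ/2) zero_le_one hε0.le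
    rw [one_smul, sub_add_cancel] at h1
    have h2 : f (x₀ - (δ/2) • z) = ℓ x₀ - (δ/2) * ℓ z := by
      rw [hℓ _ hεmem, map_sub, map_smul, smul_eq_mul]
    rw [hfx₀, h2] at h1
    nlinarith
  -- S closed under addition
  have hSadd : ∀ x ∈ S, ∀ y ∈ S, x + y ∈ S := by
    rintro x ⟨hxC, hxf⟩ y ⟨hyC, hyf⟩
    refine ⟨hC.add_mem x hxC y hyC, le_antisymm (hfle _ (hC.add_mem x hxC y hyC)) ?_⟩
    have := hsuper x hxC y hyC 1 1 zero_le_one zero_le_one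
    rw [one_smul, one_smul, one_mul, one_mul] at this
    rw [map_add]
    linarith [hxf ▸ hyf ▸ this]
  -- S closed under nonneg scaling
  have hSsmul : ∀ x ∈ S, ∀ a : ℝ, 0 ≤ a → a • x ∈ S := by
    rintro x ⟨hxC, hxf⟩ a ha
    refine ⟨hC.smul_mem x hxC a ha, le_antisymm (hfle _ (hC.smul_mem x hxC a ha)) ?_⟩
    have := hsuper x hxC x hxC a 0 ha le_rfl
    rw [zero_smul, add_zero, zero_mul, add_zero] at this
    rw [map_smul, smul_eq_mul]
    calc a * ℓ x = a * f x := by rw [hxf]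
    _ ≤ f (a • x) := this
  have hSconv : Convex ℝ S := by
    intro x hx y hy a b ha hb _
    exact hSadd _ (hSsmul x hx a ha) _ (hSsmul y hy b hb)
  -- concavity and continuity of g = f - ℓ on interior C
  have hgconc : ConcaveOn ℝ C (fun z => f z - ℓ z) := by
    refine ⟨hCconv, ?_⟩
    intro x hx y hy a b ha hb hab
    have h1 := hsuper x hx y hy a b ha hb
    have h2 : ℓ (a • x + b • y) = a * ℓ x + b * ℓ y := by
      rw [map_add, map_smul, map_smul, smul_eq_mul, smul_eq_mul]
    show a * (f x - ℓ x) + b * (f y - ℓ y) ≤ f (a • x + b • y) - ℓ (a • x + b • y)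
    rw [h2]
    nlinarith [h1]
  have hgcont : ContinuousOn (fun z => f z - ℓ z) (interior C) :=
    hgconc.continuousOn_interior
  -- key: closure S ∩ interior C ⊆ S
  have hkey : ∀ z ∈ closure S, z ∈ interior C → z ∈ S := by
    intro z hz hzi
    refine ⟨interior_subset hzi, ?_⟩
    obtain ⟨u, hu, hulim⟩ := mem_closure_iff_seq_limit.mp hz
    have hev : ∀ᶠ n in atTop, u n ∈ interior C :=
      hulim.eventually (isOpen_interior.mem_nhds hzi)
    have htend : Tendsto u atTop (𝓝[interior C] z) :=
      tendsto_nhdsWithin_iff.mpr ⟨hulim, hev⟩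
    have hlim : Tendsto (fun n => f (u n) - ℓ (u n)) atTop (𝓝 (f z - ℓ z)) :=
      (hgcont z hzi).tendsto.comp htend
    have hzero : (fun n => f (u n) - ℓ (u n)) = fun _ => (0:ℝ) := by
      funext n
      rw [(hu n).2, sub_self]
    rw [hzero] at hlim
    have := tendsto_nhds_unique hlim tendsto_const_nhds
    linarith [this]
  have hx₀S : x₀ ∈ S := ⟨hx₀C, hfx₀⟩
  -- the main closedness claim
  have hScl : ∀ z ∈ closure S, z ∈ S := by
    intro z hz
    obtain ⟨u, hu, hulim⟩ := mem_closure_iff_seq_limit.mp hz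
    have hzC : z ∈ C := by
      have : closure S ⊆ closure C := closure_mono (fun w hw => hw.1)
      exact hCclosed.closure_eq ▸ this hz
    -- points on the segment towards x₀ are in S ∩ interior C
    have hw : ∀ t : ℝ, 0 < t → t ≤ 1 →
        t • x₀ + (1 - t) • z ∈ S ∧ t • x₀ + (1 - t) • z ∈ interior C := by
      intro t ht ht1
      have hmem : t • x₀ + (1 - t) • z ∈ interior C :=
        hCconv.combo_interior_closure_mem_interior hx₀i (subset_closure hzC) ht
          (by linarith) (by ring)
      refine ⟨hkey _ ?_ hmem, hmem⟩
      have hseq : ∀ n, t • x₀ + (1 - t) • u n ∈ S := fun n =>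
        hSadd _ (hSsmul x₀ hx₀S t ht.le) _ (hSsmul _ (hu n) (1 - t) (by linarith))
      have htnd : Tendsto (fun n => t • x₀ + (1 - t) • u n) atTop
          (𝓝 (t • x₀ + (1 - t) • z)) :=
        tendsto_const_nhds.add (hulim.const_smul _)
      exact mem_closure_of_tendsto htnd (Eventually.of_forall hseq)
    by_cases hzi : z ∈ interior C
    · exact hkey z hz hzi
    -- helper: if 0 ∈ interior C then z ∈ interior C
    have hzero_int : (0 : Fin (r+1) → ℝ) ∈ interior C → z ∈ interior C := by
      intro h0
      have hopen : IsOpen ((fun x => z + x) '' interior C) :=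
        (isOpenMap_add_left z) _ isOpen_interior
      have hsub : (fun x => z + x) '' interior C ⊆ C := by
        rintro _ ⟨x, hx, rfl⟩
        exact hC.add_mem z hzC x (interior_subset hx)
      have hzin : z ∈ (fun x => z + x) '' interior C := ⟨0, h0, by simp⟩
      exact interior_maximal hsub hopen hzin
    by_cases hx₀0 : x₀ = 0
    · exact absurd (hzero_int (hx₀0 ▸ hx₀i)) hzi
    by_cases hspan : z ∈ Submodule.span ℝ {x₀}
    · obtain ⟨c, hc⟩ := Submodule.mem_span_singleton.mp hspan
      rcases le_or_gt 0 c with hc0 | hc0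
      · exact ⟨hzC, hℓ z (by rw [← hc]; exact hC'.smul_mem x₀ hx₀C' c hc0)⟩
      · exfalso
        apply hzi
        apply hzero_int
        have h1c : (0:ℝ) < 1 - c := by linarith
        have hcomb := hCconv.combo_interior_closure_mem_interior hx₀i
          (subset_closure hzC) (a := -c/(1-c)) (b := 1/(1-c))
          (div_pos (by linarith) h1c) (le_of_lt (div_pos one_pos h1c))
          (by rw [← add_div, div_eq_one_iff_eq h1c.ne']; ring)
        have : (-c/(1-c)) • x₀ + (1/(1-c)) • z = 0 := by
          rw [← hc, smul_smul, ← add_smul]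
          have : -c/(1-c) + 1/(1-c) * c = 0 := by field_simp; ring
          rw [this, zero_smul]
        rwa [this] at hcomb
    · -- linearly independent case
      have hli : LinearIndependent ℝ ![z, x₀] := by
        rw [LinearIndependent.pair_iff]
        intro s t hst
        have hs : s = 0 := by
          by_contra hs
          apply hspan
          have hz2 : z = (-t/s) • x₀ := by
            have h := congrArg (fun w => (s⁻¹ : ℝ) • w) hst
            simp only [smul_add, smul_smul, smul_zero] at h
            rw [inv_mul_cancel₀ hs, one_smul] at h
            have h2 : z = -((s⁻¹ * t) • x₀) := by
              rw [eq_neg_iff_add_eq_zero]; exact h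
            rw [h2, ← neg_smul]
            congr 1
            field_simp
          rw [hz2]
          exact Submodule.smul_mem _ _ (Submodule.mem_span_singleton_self x₀)
        subst hs
        rw [zero_smul, zero_add] at hst
        exact ⟨rfl, (smul_eq_zero.mp hst).resolve_right hx₀0⟩
      set H := Submodule.span ℝ (Set.range ![z, x₀]) with hHdef
      have hzH : z ∈ H := Submodule.subset_span ⟨0, rfl⟩
      have hx₀H : x₀ ∈ H := Submodule.subset_span ⟨1, rfl⟩
      have hfr : Module.finrank ℝ H = 2 := by
        rw [finrank_span_eq_card hli]
        simp
      obtain ⟨m, D, hDpoly, hDcover, hDlin⟩ := hH H hfr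
      set w : ℕ → (Fin (r+1) → ℝ) :=
        fun n : ℕ => (1/((n:ℝ)+1)) • x₀ + (1 - 1/((n:ℝ)+1)) • z with hwdef
      have hwS : ∀ n, w n ∈ S ∧ w n ∈ interior C := by
        intro n
        have hpos : (0:ℝ) < 1/((n:ℝ)+1) := by positivity
        have hle : (1/((n:ℝ)+1)) ≤ 1 := by
          rw [div_le_one (by positivity)]
          linarith [Nat.cast_nonneg (α := ℝ) n]
        have := hw (1/((n:ℝ)+1)) hpos hle
        simpa [hwdef] using this
      have hwHC : ∀ n, w n ∈ (H : Set (Fin (r+1) → ℝ)) ∩ C := by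
        intro n
        refine ⟨?_, interior_subset (hwS n).2⟩
        simp only [hwdef]
        exact H.add_mem (H.smul_mem _ hx₀H) (H.smul_mem _ hzH)
      have hwlim : Tendsto w atTop (𝓝 z) := by
        rw [hwdef]
        have h1 : Tendsto (fun n : ℕ => 1/((n:ℝ)+1)) atTop (𝓝 0) :=
          tendsto_one_div_add_atTop_nhds_zero_nat
        have h2 : Tendsto (fun n : ℕ => (1/((n:ℝ)+1)) • x₀ + (1 - 1/((n:ℝ)+1)) • z)
            atTop (𝓝 ((0:ℝ) • x₀ + ((1:ℝ) - 0) • z)) :=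
          (h1.smul_const x₀).add ((tendsto_const_nhds.sub h1).smul_const z)
        simpa using h2
      have hsel : ∀ n : ℕ, ∃ i : Fin m, w n ∈ D i := by
        intro n
        have := hwHC n
        rw [hDcover] at this
        exact Set.mem_iUnion.mp this
      choose sel hsel using hsel
      have hpig : ∃ i : Fin m, ∃ᶠ n in atTop, sel n = i := by
        by_contra h
        push_neg at h
        have h' : ∀ i : Fin m, ∀ᶠ n in atTop, sel n ≠ i := by
          intro i
          exact h i
        have := (eventually_all.mpr h').exists
        obtain ⟨n, hn⟩ := this
        exact hn (sel n) rfl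
      obtain ⟨i₀, hfreq⟩ := hpig
      have hfreqD : ∃ᶠ n in atTop, w n ∈ D i₀ :=
        hfreq.mono (fun n hn => hn ▸ hsel n)
      have hzD : z ∈ D i₀ :=
        (hDpoly i₀).isClosed.mem_of_frequently_of_tendsto hfreqD hwlim
      obtain ⟨ℓᵢ, hℓᵢ⟩ := hDlin i₀
      have hcont1 : Tendsto (fun n => ℓᵢ (w n)) atTop (𝓝 (ℓᵢ z)) :=
        (ℓᵢ.continuous_of_finiteDimensional.tendsto z).comp hwlim
      have hcont2 : Tendsto (fun n => ℓ (w n)) atTop (𝓝 (ℓ z)) :=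
        (ℓ.continuous_of_finiteDimensional.tendsto z).comp hwlim
      have heqf : ∃ᶠ n in atTop, ℓᵢ (w n) = ℓ (w n) := by
        apply hfreqD.mono
        intro n hn
        rw [← hℓᵢ (w n) hn]
        exact ((hwS n).1).2
      have : ℓᵢ z = ℓ z := tendsto_nhds_unique_of_frequently_eq hcont1 hcont2 heqf
      exact ⟨hzC, by rw [hℓᵢ z hzD, this]⟩
  exact ⟨isClosed_of_closure_subset hScl, hSconv, hSadd, hSsmul⟩
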